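/- Let X be a real Hilbert space, F : X → X, and let x†, x̄, y, yδ ∈ X with F(x†) = y and ‖y − yδ‖ ≤ δ for some δ > 0. Let α > 0 and let xαδ ∈ X satisfy F(xαδ) + α(xαδ − x̄) = yδ. Suppose A : X → X is a bounded linear accretive operator and M : X → X is a bounded linear operator such that F(xαδ) − F(x†) = A M (xαδ − x†) with ‖M − I‖ ≤ c for some c ∈ [0,1). Suppose further that x† − x̄ = A w_R + r_R for some w_R, r_R ∈ X with ‖w_R‖ ≤ R and ‖r_R‖ ≤ d. Then ‖xαδ − x†‖ ≤ (1/(1 − c)) (δ/α + α R + d). In particular, under the benchmark source condition x† − x̄ = A w (i.e. R = ‖w‖, d = 0) and the parameter choice δ/τ ≤ α² ≤ τδ with τ ≥ 1, one obtains ‖xαδ − x†‖ ≤ (1/(1 − c)) (τ + ‖w‖) √(τ δ). -/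

import Mathlib

open RealInnerProductSpace

section aux
variable {X : Type*} [NormedAddCommGroup X] [InnerProductSpace ℝ X] [CompleteSpace X]

lemma resolvent_exists (A : X →L[ℝ] X) (hacc : ∀ x : X, 0 ≤ ⟪A x, x⟫) {α : ℝ} (hα : 0 < α) :
    ∃ E : X ≃L[ℝ] X, (∀ v : X, (E v : X) = A v + α • v) ∧
      (∀ u : X, α * ‖E.symm u‖ ≤ ‖u‖) ∧ (∀ u : X, ‖E.symm (A u)‖ ≤ ‖u‖) := by
  set T : X →L[ℝ] X := A + α • ContinuousLinearMap.id ℝ X with hTdef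
  have hT : ∀ x : X, T x = A x + α • x := fun x => rfl
  set B : X →L[ℝ] X →L[ℝ] ℝ := (innerSL ℝ).comp T with hBdef
  have hB : ∀ v w : X, B v w = ⟪T v, w⟫ := fun v w => rfl
  have coercive : IsCoercive B := by
    refine ⟨α, hα, fun u => ?_⟩
    have h1 : B u u = ⟪A u, u⟫ + α * ⟪u, u⟫ := by
      rw [hB, hT, inner_add_left, real_inner_smul_left]
    have h2 : ⟪u, u⟫ = ‖u‖ * ‖u‖ := real_inner_self_eq_norm_mul_norm u
    have := hacc u
    nlinarith
  set E := coercive.continuousLinearEquivOfBilin with hEdef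
  have hE : ∀ v : X, (E v : X) = A v + α • v := by
    intro v
    refine ext_inner_right ℝ fun w => ?_
    rw [coercive.continuousLinearEquivOfBilin_apply, hB, hT]
  have hEsymm : ∀ u : X, A (E.symm u) + α • (E.symm u) = u := by
    intro u
    rw [← hE (E.symm u)]
    exact E.apply_symm_apply u
  clear_value T B E
  refine ⟨E, hE, ?_, ?_⟩
  · intro u
    set x := E.symm u with hx
    clear_value x
    have h1 : α * ‖x‖ ^ 2 ≤ ⟪u, x⟫ := by
      have := hacc x
      have h2 : ⟪u, x⟫ = ⟪A x, x⟫ + α * ⟪x, x⟫ := by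
        rw [← hEsymm u, inner_add_left, real_inner_smul_left, ← hx]
      have h3 : ⟪x, x⟫ = ‖x‖ ^ 2 := real_inner_self_eq_norm_sq x
      nlinarith
    have h2 : ⟪u, x⟫ ≤ ‖u‖ * ‖x‖ := real_inner_le_norm u x
    rw [sq] at h1
    rcases eq_or_lt_of_le (norm_nonneg x) with h | h
    · rw [← h, mul_zero]; exact norm_nonneg u
    · have h6 : α * ‖x‖ * ‖x‖ ≤ ‖u‖ * ‖x‖ := by
        calc α * ‖x‖ * ‖x‖ = α * (‖x‖ * ‖x‖) := by ring
        _ ≤ ⟪u, x⟫ := h1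
        _ ≤ ‖u‖ * ‖x‖ := h2
      exact le_of_mul_le_mul_right h6 h
  · intro u
    set x := E.symm (A u) with hx
    clear_value x
    have heq : A x + α • x = A u := by rw [hx]; exact hEsymm (A u)
    have h1 : A (x - u) = -(α • x) := by
      rw [map_sub]; rw [← heq]; abel
    have h2 : 0 ≤ ⟪A (x - u), x - u⟫ := hacc (x - u)
    have h3 : ⟪A (x - u), x - u⟫ = -(α * ⟪x, x⟫) + α * ⟪x, u⟫ := by
      rw [h1, inner_neg_left, real_inner_smul_left, inner_sub_right]
      ring
    have h4 : ‖x‖ ^ 2 ≤ ⟪x, u⟫ := by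
      have h5' : ⟪x, x⟫ = ‖x‖ ^ 2 := real_inner_self_eq_norm_sq x
      rw [h3, h5'] at h2
      have h7 : α * ‖x‖ ^ 2 ≤ α * ⟪x, u⟫ := by linarith
      exact le_of_mul_le_mul_left h7 hα
    have h5 : ⟪x, u⟫ ≤ ‖x‖ * ‖u‖ := real_inner_le_norm x u
    rw [sq] at h4
    rcases eq_or_lt_of_le (norm_nonneg x) with h | h
    · rw [← h]; exact norm_nonneg u
    · have h6 : ‖x‖ * ‖x‖ ≤ ‖x‖ * ‖u‖ := le_trans h4 h5
      exact le_of_mul_le_mul_left h6 h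
end aux

/-- Error estimate for Lavrentiev regularization under a range invariance condition
(with N ≡ 0) and an (approximate) source condition x†−x̄ = Aw_R + r_R:
‖x_α^δ − x†‖ ≤ (1/(1−c))(δ/α + αR + d); in particular, under the benchmark source
condition x†−x̄ = Aw and the parameter choice δ/τ ≤ α² ≤ τδ one obtains the rate
‖x_α^δ − x†‖ ≤ (1/(1−c))(τ + ‖w‖)√(τδ). -/
theorem stmt_16 {X : Type*} [NormedAddCommGroup X] [InnerProductSpace ℝ X] [CompleteSpace X]
    (F : X → X) (y yδ xbar xdag xad : X) (δ α : ℝ) (hδ : 0 < δ) (hα : 0 < α)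
    (hsol : F xdag = y) (hnoise : ‖y - yδ‖ ≤ δ)
    (hlav : F xad + α • (xad - xbar) = yδ)
    (A M : X →L[ℝ] X) (hacc : ∀ x : X, 0 ≤ ⟪A x, x⟫)
    (hinv : F xad - F xdag = A (M (xad - xdag)))
    (c : ℝ) (hc0 : 0 ≤ c) (hc1 : c < 1)
    (hM : ‖M - ContinuousLinearMap.id ℝ X‖ ≤ c)
    (wR rR : X) (R d : ℝ) (hsc : xdag - xbar = A wR + rR)
    (hwR : ‖wR‖ ≤ R) (hrR : ‖rR‖ ≤ d) :
    ‖xad - xdag‖ ≤ (1 / (1 - c)) * (δ / α + α * R + d) ∧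
      ∀ w : X, ∀ τ : ℝ, 1 ≤ τ → xdag - xbar = A w →
        δ / τ ≤ α ^ 2 → α ^ 2 ≤ τ * δ →
          ‖xad - xdag‖ ≤ (1 / (1 - c)) * (τ + ‖w‖) * Real.sqrt (τ * δ) := by
  obtain ⟨E, hE, hEb1, hEb2⟩ := resolvent_exists A hacc hα
  set e := xad - xdag with he_def
  set D : X →L[ℝ] X := M - ContinuousLinearMap.id ℝ X with hDdef
  have h1c : (0:ℝ) < 1 - c := by linarith
  have key : ∀ (w' r' : X) (R' d' : ℝ), xdag - xbar = A w' + r' → ‖w'‖ ≤ R' → ‖r'‖ ≤ d' →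
      ‖e‖ ≤ (1 / (1 - c)) * (δ / α + α * R' + d') := by
    intro w' r' R' d' hsc' hw' hr'
    have h0 : F xad - F xdag + α • (xad - xbar) = yδ - y := by
      rw [hsol, ← hlav]; abel
    rw [hinv] at h0
    have hMe : M e = e + D e := by
      rw [hDdef]; simp
    have hx : xad - xbar = e + (A w' + r') := by
      rw [← hsc', he_def]; abel
    rw [hMe, map_add, hx, smul_add, smul_add] at h0
    have heq : A e + α • e = (yδ - y) - A (D e) - α • (A w') - α • r' := by
      rw [← h0]; abel
    have he : e = E.symm (yδ - y) - E.symm (A (D e)) - α • E.symm (A w') - α • E.symm r' := by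
      have h2 := congrArg E.symm (hE e)
      rw [E.symm_apply_apply] at h2
      rw [heq, map_sub, map_sub, map_sub, map_smul, map_smul] at h2
      exact h2
    have hb1 : ‖E.symm (yδ - y)‖ ≤ δ / α := by
      rw [le_div_iff₀ hα, mul_comm]
      exact le_trans (hEb1 (yδ - y)) (by rw [norm_sub_rev]; exact hnoise)
    have hb2 : ‖E.symm (A (D e))‖ ≤ c * ‖e‖ := by
      refine le_trans (hEb2 (D e)) ?_
      refine le_trans (D.le_opNorm e) ?_
      exact mul_le_mul_of_nonneg_right hM (norm_nonneg e)
    have hb3 : ‖E.symm (A w')‖ ≤ R' := le_trans (hEb2 w') hw'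
    have hb4 : ‖E.symm r'‖ ≤ d' / α := by
      rw [le_div_iff₀ hα, mul_comm]
      exact le_trans (hEb1 r') hr'
    have hnorm : ‖e‖ ≤ δ / α + c * ‖e‖ + α * R' + d' := by
      calc ‖e‖ = ‖E.symm (yδ - y) - E.symm (A (D e)) - α • E.symm (A w') - α • E.symm r'‖ := by
            rw [← he]
        _ ≤ ‖E.symm (yδ - y) - E.symm (A (D e)) - α • E.symm (A w')‖ + ‖α • E.symm r'‖ :=
            norm_sub_le _ _
        _ ≤ ‖E.symm (yδ - y) - E.symm (A (D e))‖ + ‖α • E.symm (A w')‖ + ‖α • E.symm r'‖ := by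
            have := norm_sub_le (E.symm (yδ - y) - E.symm (A (D e))) (α • E.symm (A w'))
            linarith
        _ ≤ ‖E.symm (yδ - y)‖ + ‖E.symm (A (D e))‖ + ‖α • E.symm (A w')‖ + ‖α • E.symm r'‖ := by
            have := norm_sub_le (E.symm (yδ - y)) (E.symm (A (D e)))
            linarith
        _ ≤ δ / α + c * ‖e‖ + α * R' + d' := by
            rw [norm_smul, norm_smul, Real.norm_eq_abs, abs_of_pos hα]
            have h5 : α * ‖E.symm (A w')‖ ≤ α * R' := mul_le_mul_of_nonneg_left hb3 hα.le
            have h6 : α * ‖E.symm r'‖ ≤ α * (d' / α) := mul_le_mul_of_nonneg_left hb4 hα.le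
            have h7 : α * (d' / α) = d' := by field_simp
            linarith
    rw [div_mul_eq_mul_div, one_mul, le_div_iff₀ h1c]
    nlinarith [hnorm]
  constructor
  · exact key wR rR R d hsc hwR hrR
  · intro w τ hτ hscw hp1 hp2
    have hτ0 : (0:ℝ) < τ := lt_of_lt_of_le one_pos hτ
    have hb := key w 0 ‖w‖ 0 (by rw [hscw]; simp) le_rfl (by simp)
    have hs0 : 0 ≤ Real.sqrt (τ * δ) := Real.sqrt_nonneg _
    have hαs : α ≤ Real.sqrt (τ * δ) := by
      have := Real.sqrt_le_sqrt hp2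
      rwa [Real.sqrt_sq hα.le] at this
    have hδα : δ / α ≤ Real.sqrt (τ * δ) := by
      have hα2 : Real.sqrt (δ / τ) ≤ α := by
        have := Real.sqrt_le_sqrt hp1
        rwa [Real.sqrt_sq hα.le] at this
      have hprod : Real.sqrt (δ / τ) * Real.sqrt (τ * δ) = δ := by
        rw [← Real.sqrt_mul (by positivity)]
        have h8 : δ / τ * (τ * δ) = δ ^ 2 := by field_simp
        rw [h8, Real.sqrt_sq hδ.le]
      rw [div_le_iff₀ hα]
      calc δ = Real.sqrt (δ / τ) * Real.sqrt (τ * δ) := hprod.symm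
        _ ≤ α * Real.sqrt (τ * δ) := mul_le_mul_of_nonneg_right hα2 hs0
        _ = Real.sqrt (τ * δ) * α := mul_comm _ _
    have hinner : δ / α + α * ‖w‖ + 0 ≤ (τ + ‖w‖) * Real.sqrt (τ * δ) := by
      have h9 : Real.sqrt (τ * δ) ≤ τ * Real.sqrt (τ * δ) := le_mul_of_one_le_left hs0 hτ
      have h10 : α * ‖w‖ ≤ Real.sqrt (τ * δ) * ‖w‖ :=
        mul_le_mul_of_nonneg_right hαs (norm_nonneg w)
      nlinarith
    calc ‖e‖ ≤ (1 / (1 - c)) * (δ / α + α * ‖w‖ + 0) := hb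
      _ ≤ (1 / (1 - c)) * ((τ + ‖w‖) * Real.sqrt (τ * δ)) := by
          exact mul_le_mul_of_nonneg_left hinner (by positivity)
      _ = (1 / (1 - c)) * (τ + ‖w‖) * Real.sqrt (τ * δ) := by ring
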